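/- Suppose S ⫫ Z (the covariate is independent of the instrument). Then for all y, x, z ∈ {0,1}: P(Y=y, X=x | Z=z) = Σ_s P(Y=y, X=x | Z=z, S=s)·P(S=s). Consequently, each term of the marginal Balke–Pearl bound set A^{−S} equals the S-expectation of the corresponding term of the conditional bound sets A^{|s}, and therefore max(A^{−S}) = max(E_S[A^{|S}]) ≤ E_S[max(A^{|S})]; i.e., the covariate-averaged Balke–Pearl lower bound is at least as large as the marginal Balke–Pearl lower bound. -/

import Mathlib

/-- Probability of a (Boolean) event under a pmf on a finite space. -/
noncomputable def pr {Ω : Type} [Fintype Ω] (μ : Ω → ℝ) (A : Ω → Bool) : ℝ :=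
  ∑ ω, if A ω then μ ω else 0

/-- Marginal conditional probability p_{yx.z} = P(Y=y, X=x | Z=z). -/
noncomputable def pm {Ω : Type} [Fintype Ω] (μ : Ω → ℝ) (Z X Y : Ω → Bool)
    (y x z : Bool) : ℝ :=
  pr μ (fun ω => (Y ω == y) && (X ω == x) && (Z ω == z)) / pr μ (fun ω => Z ω == z)

/-- Covariate-conditional probability p_{yx.zs} = P(Y=y, X=x | Z=z, S=s). -/
noncomputable def pc {Ω : Type} [Fintype Ω] (μ : Ω → ℝ) (Z X Y Sc : Ω → Bool)
    (s y x z : Bool) : ℝ :=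
  pr μ (fun ω => (Y ω == y) && (X ω == x) && (Z ω == z) && (Sc ω == s)) /
    pr μ (fun ω => (Z ω == z) && (Sc ω == s))

lemma pr_nonneg {Ω : Type} [Fintype Ω] (μ : Ω → ℝ) (h : ∀ ω, 0 ≤ μ ω) (A : Ω → Bool) :
    0 ≤ pr μ A := by
  apply Finset.sum_nonneg
  intro ω _
  split <;> simp [h ω]

lemma pr_split {Ω : Type} [Fintype Ω] (μ : Ω → ℝ) (A B : Ω → Bool) :
    pr μ A = pr μ (fun ω => A ω && (B ω == true)) + pr μ (fun ω => A ω && (B ω == false)) := by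
  unfold pr
  rw [← Finset.sum_add_distrib]
  apply Finset.sum_congr rfl
  intro ω _
  cases hA : A ω <;> cases hB : B ω <;> simp [hA, hB]

/-- if S ⫫ Z, each marginal probability p_{yx.z} is the S-average of the
conditional ones, and hence the marginal Balke–Pearl lower bound is at most the
covariate-averaged Balke–Pearl lower bound. -/
theorem marginal_bp_le_averaged_bp
    {Ω : Type} [Fintype Ω]
    (μ : Ω → ℝ)
    (hμ_nonneg : ∀ ω, 0 ≤ μ ω)
    (hμ_sum : ∑ ω, μ ω = 1)
    (Z X Y Sc : Ω → Bool)
    (hZS_pos : ∀ z s : Bool, 0 < pr μ (fun ω => (Z ω == z) && (Sc ω == s)))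
    -- independence S ⫫ Z
    (hindep : ∀ z s : Bool,
      pr μ (fun ω => (Z ω == z) && (Sc ω == s)) =
        pr μ (fun ω => Z ω == z) * pr μ (fun ω => Sc ω == s)) :
    (∀ y x z : Bool,
      pm μ Z X Y y x z = ∑ s : Bool, pc μ Z X Y Sc s y x z * pr μ (fun ω => Sc ω == s)) ∧
    max
      (max (pm μ Z X Y true false true)
        (- pm μ Z X Y false false false - pm μ Z X Y false true false
          + pm μ Z X Y true false true + pm μ Z X Y false true true))
      (max (pm μ Z X Y true false false + pm μ Z X Y false true false
          - pm μ Z X Y false false true - pm μ Z X Y false true true)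
        (pm μ Z X Y true false false))
    ≤ ∑ s : Bool, pr μ (fun ω => Sc ω == s) *
        max
          (max (pc μ Z X Y Sc s true false true)
            (- pc μ Z X Y Sc s false false false - pc μ Z X Y Sc s false true false
              + pc μ Z X Y Sc s true false true + pc μ Z X Y Sc s false true true))
          (max (pc μ Z X Y Sc s true false false + pc μ Z X Y Sc s false true false
              - pc μ Z X Y Sc s false false true - pc μ Z X Y Sc s false true true)
            (pc μ Z X Y Sc s true false false)) := by
  -- positivity of the marginal denominators and of p_s
  have hSpos : ∀ s : Bool, 0 < pr μ (fun ω => Sc ω == s) := by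
    intro s
    have h := hZS_pos true s
    rw [hindep true s] at h
    by_contra hle
    push_neg at hle
    have h0 : pr μ (fun ω => Sc ω == s) = 0 :=
      le_antisymm hle (pr_nonneg μ hμ_nonneg _)
    rw [h0, mul_zero] at h
    exact lt_irrefl 0 h
  have hZpos : ∀ z : Bool, 0 < pr μ (fun ω => Z ω == z) := by
    intro z
    have h := hZS_pos z true
    rw [hindep z true] at h
    by_contra hle
    push_neg at hle
    have h0 : pr μ (fun ω => Z ω == z) = 0 :=
      le_antisymm hle (pr_nonneg μ hμ_nonneg _)
    rw [h0, zero_mul] at h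
    exact lt_irrefl 0 h
  -- the key averaging identity
  have hkey : ∀ y x z : Bool,
      pm μ Z X Y y x z = ∑ s : Bool, pc μ Z X Y Sc s y x z * pr μ (fun ω => Sc ω == s) := by
    intro y x z
    have hN := pr_split μ (fun ω => (Y ω == y) && (X ω == x) && (Z ω == z)) Sc
    unfold pm pc
    rw [Fintype.sum_bool, hindep z true, hindep z false, hN]
    have hDt : (pr μ fun ω => Sc ω == true) ≠ 0 := (hSpos true).ne'
    have hDf : (pr μ fun ω => Sc ω == false) ≠ 0 := (hSpos false).ne'
    have hZ := (hZpos z).ne'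
    field_simp
  refine ⟨hkey, ?_⟩
  let pS : Bool → ℝ := fun s => pr μ (fun ω => Sc ω == s)
  let M : Bool → ℝ := fun s =>
    max
      (max (pc μ Z X Y Sc s true false true)
        (- pc μ Z X Y Sc s false false false - pc μ Z X Y Sc s false true false
          + pc μ Z X Y Sc s true false true + pc μ Z X Y Sc s false true true))
      (max (pc μ Z X Y Sc s true false false + pc μ Z X Y Sc s false true false
          - pc μ Z X Y Sc s false false true - pc μ Z X Y Sc s false true true)
        (pc μ Z X Y Sc s true false false))
  have hpSnn : ∀ s, 0 ≤ pS s := fun s => pr_nonneg μ hμ_nonneg _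
  have h1 : ∀ s, pS s * pc μ Z X Y Sc s true false true ≤ pS s * M s :=
    fun s => mul_le_mul_of_nonneg_left (le_trans (le_max_left _ _) (le_max_left _ _)) (hpSnn s)
  have h2 : ∀ s, pS s * (- pc μ Z X Y Sc s false false false - pc μ Z X Y Sc s false true false
      + pc μ Z X Y Sc s true false true + pc μ Z X Y Sc s false true true) ≤ pS s * M s :=
    fun s => mul_le_mul_of_nonneg_left (le_trans (le_max_right _ _) (le_max_left _ _)) (hpSnn s)
  have h3 : ∀ s, pS s * (pc μ Z X Y Sc s true false false + pc μ Z X Y Sc s false true false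
      - pc μ Z X Y Sc s false false true - pc μ Z X Y Sc s false true true) ≤ pS s * M s :=
    fun s => mul_le_mul_of_nonneg_left (le_trans (le_max_left _ _) (le_max_right _ _)) (hpSnn s)
  have h4 : ∀ s, pS s * pc μ Z X Y Sc s true false false ≤ pS s * M s :=
    fun s => mul_le_mul_of_nonneg_left (le_trans (le_max_right _ _) (le_max_right _ _)) (hpSnn s)
  simp only [hkey, Fintype.sum_bool]
  apply max_le <;> apply max_le
  · nlinarith [h1 true, h1 false]
  · nlinarith [h2 true, h2 false]
  · nlinarith [h3 true, h3 false]
  · nlinarith [h4 true, h4 false]
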